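/- For any given h, c ∈ ℂ there exists a Jordan Verma module Ṽ(h,c) of the Virasoro algebra: a module on which C acts as the scalar c, containing vectors v⁰, v¹ with L_0·v⁰ = h·v⁰, L_0·v¹ = h·v¹ + v⁰, L_{−n}·v⁰ = L_{−n}·v¹ = 0 for all n ≥ 1, generated by v¹ (i.e. Ṽ(h,c) = U(𝔏)·v¹), and universal: for any module W on which C acts as c containing vectors w⁰, w¹ satisfying the same relations, there is a unique 𝔏-module homomorphism Ṽ(h,c) → W mapping v⁰ to w⁰ and v¹ to w¹. Moreover Ṽ(h,c) is unique up to 𝔏-module isomorphism. -/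

import Mathlib

/-- A representation of the Virasoro algebra on a complex vector space `V`:
a family of operators `L n` (`n : ℤ`) and an operator `C` satisfying the Virasoro
commutation relations
`[L m, L n] = (n - m) L (m+n) + (C/12)(n³ - n) δ_{m+n,0}` and `[C, L n] = 0`. -/
structure VirasoroRep (V : Type) [AddCommGroup V] [Module ℂ V] where
  L : ℤ → Module.End ℂ V
  C : Module.End ℂ V
  comm_LL : ∀ m n : ℤ, L m * L n - L n * L m =
      ((n : ℂ) - (m : ℂ)) • L (m + n) +
        (if m + n = 0 then (((n : ℂ) ^ 3 - (n : ℂ)) / 12) else 0) • C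
  comm_CL : ∀ n : ℤ, C * L n - L n * C = 0

namespace VirasoroRep

variable {V W : Type} [AddCommGroup V] [Module ℂ V] [AddCommGroup W] [Module ℂ W]

/-- `v` is a singular vector of weight `(h, c)`: it is annihilated by all `L (-n)`, `n ≥ 1`,
and is an eigenvector of `L 0` and `C` with eigenvalues `h` resp. `c`. -/
def IsSingular (ρ : VirasoroRep V) (h c : ℂ) (v : V) : Prop :=
  (∀ n : ℤ, 1 ≤ n → ρ.L (-n) v = 0) ∧ ρ.L 0 v = h • v ∧ ρ.C v = c • v

/-- A linear subspace invariant under the Virasoro action, i.e. an `𝔏`-submodule. -/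
def Invariant (ρ : VirasoroRep V) (p : Submodule ℂ V) : Prop :=
  (∀ n : ℤ, ∀ x ∈ p, ρ.L n x ∈ p) ∧ ∀ x ∈ p, ρ.C x ∈ p

/-- The `𝔏`-submodule `U(𝔏)·v` generated by a vector `v`: the smallest invariant subspace
containing `v`. -/
def gen (ρ : VirasoroRep V) (v : V) : Submodule ℂ V :=
  sInf {p : Submodule ℂ V | ρ.Invariant p ∧ v ∈ p}

/-- The vector `v` generates the module: `U(𝔏)·v` is everything. -/
def Generates (ρ : VirasoroRep V) (v : V) : Prop :=
  ∀ p : Submodule ℂ V, ρ.Invariant p → v ∈ p → p = ⊤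

/-- A homomorphism of Virasoro modules: a linear map intertwining the actions. -/
def IsHom (ρ : VirasoroRep V) (σ : VirasoroRep W) (f : V →ₗ[ℂ] W) : Prop :=
  (∀ (n : ℤ) (x : V), f (ρ.L n x) = σ.L n (f x)) ∧ ∀ x : V, f (ρ.C x) = σ.C (f x)

end VirasoroRep

/-- A bundled module of the Virasoro algebra (a complex vector space together with a
Virasoro representation on it). -/
structure VirasoroModule where
  carrier : Type
  [isAddCommGroup : AddCommGroup carrier]
  [isModule : Module ℂ carrier]
  rep : VirasoroRep carrier

attribute [instance] VirasoroModule.isAddCommGroup VirasoroModule.isModule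

/-- `M` together with the singular vector `v` is a Verma module of weight `(h, c)`:
`v` is singular of weight `(h, c)`, generates `M`, and the pair has the universal property
that any singular vector of weight `(h, c)` in any Virasoro module receives a unique
homomorphism from `M` sending `v` to it. -/
def IsVermaModule (h c : ℂ) (M : VirasoroModule) (v : M.carrier) : Prop :=
  M.rep.IsSingular h c v ∧ M.rep.Generates v ∧
    ∀ (W : VirasoroModule) (w : W.carrier), W.rep.IsSingular h c w →
      ∃! f : M.carrier →ₗ[ℂ] W.carrier, M.rep.IsHom W.rep f ∧ f v = w

/-- `M` together with `v⁰, v¹` is a Jordan Verma module of weight `(h, c)`: `C` acts as the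
scalar `c`; `L 0` acts on the two-dimensional space spanned by `v⁰, v¹` as a Jordan block with
eigenvalue `h` (i.e. `L 0 v⁰ = h v⁰` and `L 0 v¹ = h v¹ + v⁰`); both vectors are annihilated
by all `L (-n)`, `n ≥ 1`; `v¹` generates `M`; and the data is universal among all such. -/
def IsJordanVerma (h c : ℂ) (M : VirasoroModule) (v0 v1 : M.carrier) : Prop :=
  (∀ x : M.carrier, M.rep.C x = c • x) ∧
  M.rep.L 0 v0 = h • v0 ∧
  M.rep.L 0 v1 = h • v1 + v0 ∧
  (∀ n : ℤ, 1 ≤ n → M.rep.L (-n) v0 = 0 ∧ M.rep.L (-n) v1 = 0) ∧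
  M.rep.Generates v1 ∧
  ∀ (W : VirasoroModule) (w0 w1 : W.carrier),
    (∀ x : W.carrier, W.rep.C x = c • x) →
    W.rep.L 0 w0 = h • w0 →
    W.rep.L 0 w1 = h • w1 + w0 →
    (∀ n : ℤ, 1 ≤ n → W.rep.L (-n) w0 = 0 ∧ W.rep.L (-n) w1 = 0) →
    ∃! f : M.carrier →ₗ[ℂ] W.carrier,
      M.rep.IsHom W.rep f ∧ f v0 = w0 ∧ f v1 = w1


namespace JV

open Submodule

variable (h c : ℂ)

/-- Free vector space on words `L_{m₁}⋯L_{mₖ} vⁱ`. -/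
abbrev F : Type := (List ℤ × Fin 2) →₀ ℂ

/-- Basis vector corresponding to the word `w` applied to `vⁱ`. -/
noncomputable def E (w : List ℤ) (i : Fin 2) : F := Finsupp.single (w, i) 1

/-- Prepend `L m`. -/
noncomputable def prep (m : ℤ) : F →ₗ[ℂ] F :=
  Finsupp.lmapDomain ℂ ℂ (fun p => (m :: p.1, p.2))

lemma prep_E (m : ℤ) (w : List ℤ) (i : Fin 2) : prep m (E w i) = E (m :: w) i := by
  simp [prep, E, Finsupp.mapDomain_single]

/-- Scalar in the central term of the relations. -/
noncomputable def K (m n : ℤ) : ℂ :=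
  if m + n = 0 then c * (((n : ℂ) ^ 3 - (n : ℂ)) / 12) else 0

/-- Generators of the relation subspace. -/
noncomputable def S : Set F :=
  {x | (∃ (u : List ℤ) (m n : ℤ) (w : List ℤ) (i : Fin 2),
          x = E (u ++ m :: n :: w) i - E (u ++ n :: m :: w) i
          - (((n : ℂ) - (m : ℂ)) • E (u ++ (m + n) :: w) i) - K c m n • E (u ++ w) i) ∨
       (∃ (u : List ℤ) (n : ℤ) (i : Fin 2), 1 ≤ n ∧ x = E (u ++ [-n]) i) ∨
       (∃ u : List ℤ, x = E (u ++ [0]) 0 - h • E u 0) ∨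
       (∃ u : List ℤ, x = E (u ++ [0]) 1 - h • E u 1 - E u 0)}

lemma mem_S_comm (u : List ℤ) (m n : ℤ) (w : List ℤ) (i : Fin 2) :
    E (u ++ m :: n :: w) i - E (u ++ n :: m :: w) i
      - (((n : ℂ) - (m : ℂ)) • E (u ++ (m + n) :: w) i) - K c m n • E (u ++ w) i ∈ S h c :=
  Or.inl ⟨u, m, n, w, i, rfl⟩

lemma mem_S_sing (u : List ℤ) (n : ℤ) (i : Fin 2) (hn : 1 ≤ n) :
    E (u ++ [-n]) i ∈ S h c :=
  Or.inr (Or.inl ⟨u, n, i, hn, rfl⟩)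

lemma mem_S_L00 (u : List ℤ) : E (u ++ [0]) 0 - h • E u 0 ∈ S h c :=
  Or.inr (Or.inr (Or.inl ⟨u, rfl⟩))

lemma mem_S_L01 (u : List ℤ) : E (u ++ [0]) 1 - h • E u 1 - E u 0 ∈ S h c :=
  Or.inr (Or.inr (Or.inr ⟨u, rfl⟩))

/-- The relation subspace. -/
noncomputable def R : Submodule ℂ F := Submodule.span ℂ (S h c)

lemma S_stable (m : ℤ) {x : F} (hx : x ∈ S h c) : prep m x ∈ S h c := by
  obtain h1 | h2 | h3 | h4 := hx
  · obtain ⟨u, a, b, w, i, rfl⟩ := h1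
    refine Or.inl ⟨m :: u, a, b, w, i, ?_⟩
    simp [map_sub, map_smul, prep_E, List.cons_append]
  · obtain ⟨u, n, i, hn, rfl⟩ := h2
    refine Or.inr (Or.inl ⟨m :: u, n, i, hn, ?_⟩)
    simp [prep_E, List.cons_append]
  · obtain ⟨u, rfl⟩ := h3
    refine Or.inr (Or.inr (Or.inl ⟨m :: u, ?_⟩))
    simp [map_sub, map_smul, prep_E, List.cons_append]
  · obtain ⟨u, rfl⟩ := h4
    refine Or.inr (Or.inr (Or.inr ⟨m :: u, ?_⟩))
    simp [map_sub, map_smul, prep_E, List.cons_append]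

lemma R_stable (m : ℤ) : R h c ≤ (R h c).comap (prep m) := by
  rw [R, Submodule.span_le]
  intro x hx
  exact Submodule.subset_span (S_stable h c m hx)

/-- The underlying space of the Jordan Verma module. -/
abbrev Q : Type := F ⧸ R h c

noncomputable def LQ (m : ℤ) : Q h c →ₗ[ℂ] Q h c :=
  Submodule.mapQ (R h c) (R h c) (prep m) (R_stable h c m)

lemma LQ_mk (m : ℤ) (w : List ℤ) (i : Fin 2) :
    LQ h c m ((R h c).mkQ (E w i)) = (R h c).mkQ (E (m :: w) i) := by
  simp [LQ, Submodule.mapQ_apply, prep_E]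

lemma ext_mk {W : Type} [AddCommGroup W] [Module ℂ W] {f g : Q h c →ₗ[ℂ] W}
    (H : ∀ w i, f ((R h c).mkQ (E w i)) = g ((R h c).mkQ (E w i))) : f = g := by
  apply LinearMap.ext
  intro x
  obtain ⟨y, rfl⟩ := (R h c).mkQ_surjective x
  induction y using Finsupp.induction_linear with
  | zero => simp
  | add a b ha hb => simp only [map_add, ha, hb]
  | single a b =>
      obtain ⟨w, i⟩ := a
      have hb : Finsupp.single (w, i) b = b • E w i := by
        simp [E, Finsupp.smul_single]
      simp only [hb, map_smul, H w i]

lemma mk_S_zero {x : F} (hx : x ∈ S h c) : (R h c).mkQ x = 0 := by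
  rw [Submodule.mkQ_apply, Submodule.Quotient.mk_eq_zero]
  exact Submodule.subset_span hx

/-- The Virasoro representation on the quotient. -/
noncomputable def rep : VirasoroRep (Q h c) where
  L := LQ h c
  C := c • LinearMap.id
  comm_LL := by
    intro m n
    apply ext_mk h c
    intro w i
    have hz := mk_S_zero h c (mem_S_comm h c [] m n w i)
    simp only [List.nil_append, map_sub, map_smul, LQ_mk] at hz
    simp only [LinearMap.sub_apply, Module.End.mul_apply, LinearMap.add_apply,
      LinearMap.smul_apply, LinearMap.id_apply, LQ_mk]
    by_cases hmn : m + n = 0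
    · simp only [K, hmn, if_true] at hz ⊢
      linear_combination (norm := module) hz
    · simp only [K, hmn, if_false, zero_smul] at hz ⊢
      linear_combination (norm := module) hz
  comm_CL := by
    intro n
    ext x
    simp

lemma rep_C (x : Q h c) : (rep h c).C x = c • x := rfl

noncomputable def v0 : Q h c := (R h c).mkQ (E [] 0)
noncomputable def v1 : Q h c := (R h c).mkQ (E [] 1)

lemma L0_v0 : (rep h c).L 0 (v0 h c) = h • v0 h c := by
  have hz := mk_S_zero h c (mem_S_L00 h c [])
  simp only [List.nil_append, map_sub, map_smul, sub_eq_zero] at hz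
  show LQ h c 0 ((R h c).mkQ (E [] 0)) = h • (R h c).mkQ (E [] 0)
  rw [LQ_mk]
  exact hz

lemma L0_v1 : (rep h c).L 0 (v1 h c) = h • v1 h c + v0 h c := by
  have hz := mk_S_zero h c (mem_S_L01 h c [])
  simp only [List.nil_append, map_sub, map_smul, sub_sub, sub_eq_zero] at hz
  show LQ h c 0 ((R h c).mkQ (E [] 1)) = h • (R h c).mkQ (E [] 1) + (R h c).mkQ (E [] 0)
  rw [LQ_mk]
  exact hz

lemma Lneg (n : ℤ) (hn : 1 ≤ n) (i : Fin 2) :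
    (rep h c).L (-n) ((R h c).mkQ (E [] i)) = 0 := by
  have hz := mk_S_zero h c (mem_S_sing h c [] n i hn)
  simp only [List.nil_append] at hz
  show LQ h c (-n) ((R h c).mkQ (E [] i)) = 0
  rw [LQ_mk]
  exact hz

lemma generates : (rep h c).Generates (v1 h c) := by
  intro p hp hv1
  have hv0 : v0 h c ∈ p := by
    have h1 : (rep h c).L 0 (v1 h c) ∈ p := hp.1 0 _ hv1
    rw [L0_v1] at h1
    have := p.sub_mem h1 (p.smul_mem h hv1)
    simpa using this
  have key : ∀ (w : List ℤ) (i : Fin 2), (R h c).mkQ (E w i) ∈ p := by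
    intro w
    induction w with
    | nil =>
        intro i
        fin_cases i
        · exact hv0
        · exact hv1
    | cons m w ih =>
        intro i
        have := hp.1 m _ (ih i)
        rw [show (rep h c).L m ((R h c).mkQ (E w i)) = (R h c).mkQ (E (m :: w) i) from
          LQ_mk h c m w i] at this
        exact this
  rw [Submodule.eq_top_iff']
  intro x
  obtain ⟨y, rfl⟩ := (R h c).mkQ_surjective x
  induction y using Finsupp.induction_linear with
  | zero => simpa using p.zero_mem
  | add a b ha hb => rw [map_add]; exact p.add_mem ha hb
  | single a b =>
      obtain ⟨w, i⟩ := a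
      have hb : Finsupp.single (w, i) b = b • E w i := by
        simp [E, Finsupp.smul_single]
      rw [hb, map_smul]
      exact p.smul_mem b (key w i)

/-- Iterated action of a word of Virasoro operators. -/
noncomputable def ops {W : Type} [AddCommGroup W] [Module ℂ W] (σ : VirasoroRep W) :
    List ℤ → (W →ₗ[ℂ] W)
  | [] => LinearMap.id
  | m :: w => σ.L m ∘ₗ ops σ w

lemma ops_append {W : Type} [AddCommGroup W] [Module ℂ W] (σ : VirasoroRep W)
    (u w : List ℤ) (x : W) : ops σ (u ++ w) x = ops σ u (ops σ w x) := by
  induction u with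
  | nil => rfl
  | cons m u ih => simp [ops, List.cons_append, ih]

section Universal

variable {Wc : Type} [AddCommGroup Wc] [Module ℂ Wc] (σ : VirasoroRep Wc)
variable (w0 w1 : Wc)

/-- Target vectors. -/
noncomputable def tgt : Fin 2 → Wc := fun i => if i = 0 then w0 else w1

/-- The lift of the universal map to the free space. -/
noncomputable def glift : F →ₗ[ℂ] Wc :=
  (Finsupp.lift Wc ℂ (List ℤ × Fin 2)) (fun p => ops σ p.1 (tgt w0 w1 p.2))

lemma glift_E (w : List ℤ) (i : Fin 2) :
    glift σ w0 w1 (E w i) = ops σ w (tgt w0 w1 i) := by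
  simp [glift, E]

lemma glift_kills
    (hC : ∀ x : Wc, σ.C x = c • x)
    (h0 : σ.L 0 w0 = h • w0)
    (h1 : σ.L 0 w1 = h • w1 + w0)
    (hs : ∀ n : ℤ, 1 ≤ n → σ.L (-n) w0 = 0 ∧ σ.L (-n) w1 = 0) :
    R h c ≤ LinearMap.ker (glift σ w0 w1) := by
  rw [R, Submodule.span_le]
  rintro x (⟨u, m, n, w, i, rfl⟩ | ⟨u, n, i, hn, rfl⟩ | ⟨u, rfl⟩ | ⟨u, rfl⟩) <;>
    simp only [SetLike.mem_coe, LinearMap.mem_ker, map_sub, map_smul, glift_E, ops_append]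
  · set y := ops σ w (tgt w0 w1 i) with hy
    have hcomm := σ.comm_LL m n
    have hcy : σ.L m (σ.L n y) - σ.L n (σ.L m y)
        = ((n : ℂ) - (m : ℂ)) • σ.L (m + n) y + K c m n • y := by
      have := congrArg (fun (T : Module.End ℂ Wc) => T y) hcomm
      simp only [LinearMap.sub_apply, Module.End.mul_apply, LinearMap.add_apply,
        LinearMap.smul_apply] at this
      rw [this, hC y]
      by_cases hmn : m + n = 0
      · simp only [K, hmn, if_true, smul_smul]
        ring_nf
      · simp [K, hmn]
    have hz : σ.L m (σ.L n y) - σ.L n (σ.L m y)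
        - ((n : ℂ) - (m : ℂ)) • σ.L (m + n) y - K c m n • y = 0 := by
      rw [hcy]; abel
    calc ops σ u ((σ.L m) ((σ.L n) y)) - ops σ u ((σ.L n) ((σ.L m) y))
          - ((n : ℂ) - (m : ℂ)) • ops σ u ((σ.L (m + n)) y) - K c m n • ops σ u y
        = ops σ u (σ.L m (σ.L n y) - σ.L n (σ.L m y)
            - ((n : ℂ) - (m : ℂ)) • σ.L (m + n) y - K c m n • y) := by
          simp only [map_sub, map_smul]
      _ = 0 := by rw [hz, map_zero]
  · have : ops σ [-n] (tgt w0 w1 i) = σ.L (-n) (tgt w0 w1 i) := rfl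
    rw [this]
    have hz : σ.L (-n) (tgt w0 w1 i) = 0 := by
      fin_cases i
      · exact (hs n hn).1
      · exact (hs n hn).2
    rw [hz, map_zero]
  · have e1 : ops σ [(0 : ℤ)] (tgt w0 w1 0) = σ.L 0 w0 := rfl
    rw [e1, h0, show tgt w0 w1 0 = w0 from rfl, ← map_smul, sub_eq_zero]
  · have e1 : ops σ [(0 : ℤ)] (tgt w0 w1 1) = σ.L 0 w1 := rfl
    rw [e1, h1, show tgt w0 w1 1 = w1 from rfl, show tgt w0 w1 0 = w0 from rfl]
    rw [map_add, map_smul]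
    abel

end Universal

lemma liftQ_mk {W : Type} [AddCommGroup W] [Module ℂ W] (g : F →ₗ[ℂ] W)
    (hg : R h c ≤ LinearMap.ker g) (x : F) :
    (R h c).liftQ g hg ((R h c).mkQ x) = g x := rfl

lemma hom_comp {V W X : Type} [AddCommGroup V] [Module ℂ V] [AddCommGroup W] [Module ℂ W]
    [AddCommGroup X] [Module ℂ X] {ρ : VirasoroRep V} {σ : VirasoroRep W} {τ : VirasoroRep X}
    {f : V →ₗ[ℂ] W} {g : W →ₗ[ℂ] X} (hf : ρ.IsHom σ f) (hg : σ.IsHom τ g) :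
    ρ.IsHom τ (g ∘ₗ f) :=
  ⟨fun n x => by simp [hf.1 n x, hg.1 n (f x)],
   fun x => by simp [hf.2 x, hg.2 (f x)]⟩

lemma hom_id {V : Type} [AddCommGroup V] [Module ℂ V] (ρ : VirasoroRep V) :
    ρ.IsHom ρ LinearMap.id := ⟨fun _ _ => rfl, fun _ => rfl⟩

lemma hom_unique {V W : Type} [AddCommGroup V] [Module ℂ V] [AddCommGroup W] [Module ℂ W]
    {ρ : VirasoroRep V} {σ : VirasoroRep W} {v : V} (hgen : ρ.Generates v)
    {f g : V →ₗ[ℂ] W} (hf : ρ.IsHom σ f) (hg : ρ.IsHom σ g) (hv : f v = g v) : f = g := by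
  have htop : LinearMap.eqLocus f g = ⊤ := by
    refine hgen _ ⟨fun n x hx => ?_, fun x hx => ?_⟩ hv
    · have hx' : f x = g x := hx
      show f (ρ.L n x) = g (ρ.L n x)
      rw [hf.1 n x, hg.1 n x, hx']
    · have hx' : f x = g x := hx
      show f (ρ.C x) = g (ρ.C x)
      rw [hf.2 x, hg.2 x, hx']
  ext x
  exact Submodule.eq_top_iff'.mp htop x

/-- The constructed Jordan Verma module. -/
noncomputable def Mod : VirasoroModule := ⟨Q h c, rep h c⟩

lemma isJordanVerma : IsJordanVerma h c (Mod h c) (v0 h c) (v1 h c) := by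
  refine ⟨rep_C h c, L0_v0 h c, L0_v1 h c, fun n hn => ⟨Lneg h c n hn 0, Lneg h c n hn 1⟩,
    generates h c, ?_⟩
  intro W w0 w1 hC h0 h1 hs
  have hker := glift_kills h c W.rep w0 w1 hC h0 h1 hs
  refine ⟨(R h c).liftQ (glift W.rep w0 w1) hker, ⟨⟨?_, ?_⟩, ?_, ?_⟩, ?_⟩
  · intro n x
    have : ((R h c).liftQ (glift W.rep w0 w1) hker) ∘ₗ ((rep h c).L n)
        = (W.rep.L n) ∘ₗ ((R h c).liftQ (glift W.rep w0 w1) hker) := by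
      apply ext_mk h c
      intro w i
      simp only [LinearMap.comp_apply]
      rw [show (rep h c).L n ((R h c).mkQ (E w i)) = (R h c).mkQ (E (n :: w) i) from
        LQ_mk h c n w i]
      rw [liftQ_mk, liftQ_mk, glift_E, glift_E]
      rfl
    exact congrArg (fun T => T x) (congrArg DFunLike.coe this)
  · intro x
    have e : (Mod h c).rep.C x = c • x := rfl
    rw [e]
    exact (((R h c).liftQ (glift W.rep w0 w1) hker).map_smul c (x : Q h c)).trans (hC _).symm
  · show ((R h c).liftQ (glift W.rep w0 w1) hker) ((R h c).mkQ (E [] 0)) = w0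
    rw [liftQ_mk, glift_E]
    rfl
  · show ((R h c).liftQ (glift W.rep w0 w1) hker) ((R h c).mkQ (E [] 1)) = w1
    rw [liftQ_mk, glift_E]
    rfl
  · rintro f' ⟨hf'hom, hf'0, hf'1⟩
    refine hom_unique (generates h c) hf'hom ⟨?_, ?_⟩ ?_
    · intro n x
      have : ((R h c).liftQ (glift W.rep w0 w1) hker) ∘ₗ ((rep h c).L n)
          = (W.rep.L n) ∘ₗ ((R h c).liftQ (glift W.rep w0 w1) hker) := by
        apply ext_mk h c
        intro w i
        simp only [LinearMap.comp_apply]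
        rw [show (rep h c).L n ((R h c).mkQ (E w i)) = (R h c).mkQ (E (n :: w) i) from
          LQ_mk h c n w i]
        rw [liftQ_mk, liftQ_mk, glift_E, glift_E]
        rfl
      exact (congrArg (fun T => T x) (congrArg DFunLike.coe this)).symm.symm
    · intro x
      show _ = W.rep.C _
      rw [show (rep h c).C x = c • x from rfl, map_smul, hC]
    · have e : ((R h c).liftQ (glift W.rep w0 w1) hker) (v1 h c) = w1 := by
        show ((R h c).liftQ (glift W.rep w0 w1) hker) ((R h c).mkQ (E [] 1)) = w1
        rw [liftQ_mk, glift_E]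
        rfl
      exact hf'1.trans e.symm

end JV

/-- For any `h, c : ℂ` the Jordan Verma module `Ṽ(h,c)` exists, and it is unique up to an
isomorphism of Virasoro modules carrying the distinguished vectors `v⁰, v¹` to the
distinguished vectors. -/
theorem jordan_verma_module_exists_unique (h c : ℂ) :
    (∃ (M : VirasoroModule) (v0 v1 : M.carrier), IsJordanVerma h c M v0 v1) ∧
    (∀ (M N : VirasoroModule) (v0 v1 : M.carrier) (w0 w1 : N.carrier),
      IsJordanVerma h c M v0 v1 → IsJordanVerma h c N w0 w1 →
      ∃ e : M.carrier ≃ₗ[ℂ] N.carrier,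
        M.rep.IsHom N.rep e.toLinearMap ∧ e v0 = w0 ∧ e v1 = w1) := by
  constructor
  · exact ⟨JV.Mod h c, JV.v0 h c, JV.v1 h c, JV.isJordanVerma h c⟩
  · intro M N v0 v1 w0 w1 hM hN
    obtain ⟨hMC, hM0, hM1, hMs, hMgen, hMuniv⟩ := hM
    obtain ⟨hNC, hN0, hN1, hNs, hNgen, hNuniv⟩ := hN
    obtain ⟨f, ⟨hf, hf0, hf1⟩, -⟩ := hMuniv N w0 w1 hNC hN0 hN1 hNs
    obtain ⟨g, ⟨hg, hg0, hg1⟩, -⟩ := hNuniv M v0 v1 hMC hM0 hM1 hMs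
    have hgf : g ∘ₗ f = LinearMap.id :=
      JV.hom_unique hMgen (JV.hom_comp hf hg) (JV.hom_id M.rep)
        (by simp [LinearMap.comp_apply, hf1, hg1])
    have hfg : f ∘ₗ g = LinearMap.id :=
      JV.hom_unique hNgen (JV.hom_comp hg hf) (JV.hom_id N.rep)
        (by simp [LinearMap.comp_apply, hg1, hf1])
    refine ⟨LinearEquiv.ofLinear f g hfg hgf, ?_, hf0, hf1⟩
    exact hf
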